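/- Assume hypotheses (H1)–(H3) for a smooth Hamiltonian H on the slow–fast phase space M = ℝ^{2r} × ℝ^{2k}, with momentum map J satisfying ⟨d₁J⟩ = 0, and set Θ := S(d₁J). Then for every ε ≠ 0 the average of the singular symplectic form σ_ε along the flow φ satisfies ⟨σ_ε⟩ = σ_ε − dΘ. -/

import Mathlib

open Real MeasureTheory Asymptotics Set

noncomputable section

/-- Fast factor `ℝ^{2r}` with variables `(y, x)`. -/
abbrev Fast (r : ℕ) := (Fin r → ℝ) × (Fin r → ℝ)

/-- Slow factor `ℝ^{2k}` with variables `(p, q)`. -/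
abbrev Slow (k : ℕ) := (Fin k → ℝ) × (Fin k → ℝ)

/-- The slow-fast phase space `M = ℝ^{2r} × ℝ^{2k}`. -/
abbrev SF (r k : ℕ) := Fast r × Slow k

/-- The fast Hamiltonian vector field `X_H^{(0)}`: `ẏ = -∂H/∂x`, `ẋ = ∂H/∂y`,
zero slow components. -/
def fastVF {r k : ℕ} (H : SF r k → ℝ) (m : SF r k) : SF r k :=
  ((fun i => -(fderiv ℝ H m ((0, Pi.single i 1), 0)),
    fun i => fderiv ℝ H m ((Pi.single i 1, 0), 0)), 0)

/-- The slow Hamiltonian vector field `X_H^{(1)}`: `ṗ = -∂H/∂q`, `q̇ = ∂H/∂p`,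
zero fast components. -/
def slowVF {r k : ℕ} (H : SF r k → ℝ) (m : SF r k) : SF r k :=
  (0, (fun j => -(fderiv ℝ H m (0, (0, Pi.single j 1))),
       fun j => fderiv ℝ H m (0, (Pi.single j 1, 0))))

/-- The differential of `f` in the slow variables only, `d₁f`, as a 1-form. -/
def d1Form {r k : ℕ} (f : SF r k → ℝ) (m w : SF r k) : ℝ :=
  fderiv ℝ f m ((0 : Fast r), w.2)

/-- Average `⟨α⟩` of a 1-form `α` along a `2π`-periodic flow `φ`:
`⟨α⟩_m(w) = (1/2π)∫₀^{2π} α_{φ(t,m)}(D_mφ(t,·) w) dt`. -/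
def avg1 {r k : ℕ} (φ : ℝ → SF r k → SF r k) (α : SF r k → SF r k → ℝ)
    (m w : SF r k) : ℝ :=
  (1 / (2 * π)) * ∫ t in (0:ℝ)..(2 * π), α (φ t m) (fderiv ℝ (φ t) m w)

/-- Integrating operator `S(α)` on a 1-form `α` along a `2π`-periodic flow `φ`. -/
def intOp1 {r k : ℕ} (φ : ℝ → SF r k → SF r k) (α : SF r k → SF r k → ℝ)
    (m w : SF r k) : ℝ :=
  (1 / (2 * π)) * ∫ t in (0:ℝ)..(2 * π), (t - π) * α (φ t m) (fderiv ℝ (φ t) m w)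

/-- The canonical fast symplectic form `σ₀((u_y,u_x),(v_y,v_x)) = u_y·v_x − u_x·v_y`. -/
def sigma0 {r : ℕ} (u v : Fast r) : ℝ :=
  ∑ i : Fin r, u.1 i * v.2 i - ∑ i : Fin r, u.2 i * v.1 i

/-- The canonical slow symplectic form `σ₁((u_p,u_q),(v_p,v_q)) = u_p·v_q − u_q·v_p`. -/
def sigma1 {k : ℕ} (u v : Slow k) : ℝ :=
  ∑ j : Fin k, u.1 j * v.2 j - ∑ j : Fin k, u.2 j * v.1 j

/-- The singular symplectic form `σ_ε = π₀^*σ₀ + (1/ε) π₁^*σ₁` on `M`. -/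
def sigmaE {r k : ℕ} (ε : ℝ) (u v : SF r k) : ℝ :=
  sigma0 u.1 v.1 + (1 / ε) * sigma1 u.2 v.2

/-- The average of a 2-form `β` along a `2π`-periodic flow `φ`:
`⟨β⟩_m(u,v) = (1/2π)∫₀^{2π} β_{φ(t,m)}(D_mφ(t,·)u, D_mφ(t,·)v) dt`. -/
def avg2 {r k : ℕ} (φ : ℝ → SF r k → SF r k) (β : SF r k → SF r k → SF r k → ℝ)
    (m u v : SF r k) : ℝ :=
  (1 / (2 * π)) *
    ∫ t in (0:ℝ)..(2 * π), β (φ t m) (fderiv ℝ (φ t) m u) (fderiv ℝ (φ t) m v)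

/-- The differential of `f` in the slow variables, as a continuous linear map. -/
def d1FormL {r k : ℕ} (f : SF r k → ℝ) (m : SF r k) : SF r k →L[ℝ] ℝ :=
  (fderiv ℝ f m).comp
    ((ContinuousLinearMap.inr ℝ (Fast r) (Slow k)).comp
      (ContinuousLinearMap.snd ℝ (Fast r) (Slow k)))

/-- The Hannay-Berry 1-form `Θ = S(d₁J)`, as a map `M → M^*`:
`Θ_m = (1/2π)∫₀^{2π} (t−π) (φ_t)^*(d₁J)_m dt`. -/
def ThetaL {r k : ℕ} (φ : ℝ → SF r k → SF r k) (J : SF r k → ℝ) (m : SF r k) :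
    SF r k →L[ℝ] ℝ :=
  (1 / (2 * π)) •
    ∫ t in (0:ℝ)..(2 * π), (t - π) • ((d1FormL J (φ t m)).comp (fderiv ℝ (φ t) m))


/-! ### Auxiliary lemmas -/

lemma top_add_one_le : ((⊤:ℕ∞) : WithTop ℕ∞) + 1 ≤ ((⊤:ℕ∞) : WithTop ℕ∞) := by
  exact_mod_cast le_top

lemma one_le_top' : ((⊤:ℕ∞) : WithTop ℕ∞) ≠ 0 := by simp

lemma fast_decomp {r k : ℕ} (b : Fast r) :
    ((b, (0 : Slow k)) : SF r k) =
      (∑ i, b.1 i • ((((Pi.single i 1 : Fin r → ℝ), (0 : Fin r → ℝ)), (0 : Slow k)) : SF r k))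
      + ∑ i, b.2 i • ((((0 : Fin r → ℝ), (Pi.single i 1 : Fin r → ℝ)), (0 : Slow k)) : SF r k) := by
  refine Prod.ext (Prod.ext ?_ ?_) ?_ <;>
    simp [Prod.fst_sum, Prod.snd_sum, Finset.sum_apply, Pi.single_apply, funext_iff,
      mul_ite, Finset.sum_ite_eq', Finset.sum_ite_eq]

lemma clm_fast_expand {r k : ℕ} (T : SF r k →L[ℝ] ℝ) (b : Fast r) :
    T (b, 0) = ∑ i, b.1 i * T ((Pi.single i 1, 0), 0)
      + ∑ i, b.2 i * T ((0, Pi.single i 1), 0) := by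
  rw [fast_decomp (k := k) b, map_add, map_sum, map_sum]
  simp only [_root_.map_smul, smul_eq_mul]

lemma sf_decomp {r k : ℕ} (c : SF r k) : c = (c.1, (0:Slow k)) + ((0:Fast r), c.2) := by
  ext <;> simp

lemma cruxAlg {r k : ℕ} (S : SF r k →L[ℝ] SF r k →L[ℝ] ℝ) (hS : ∀ a b, S a b = S b a)
    (a b : SF r k) :
    (∑ i, (-(S a ((0, Pi.single i 1), 0)) * b.1.2 i + a.1.1 i * S b ((Pi.single i 1, 0), 0)))
    - (∑ i, (S a ((Pi.single i 1, 0), 0) * b.1.1 i + a.1.2 i * -(S b ((0, Pi.single i 1), 0))))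
    = S a ((0:Fast r), b.2) - S b ((0:Fast r), a.2) := by
  have sum1 : ∀ (c d : SF r k),
      ∑ i, d.1.1 i * S c ((Pi.single i 1,0),0) + ∑ i, d.1.2 i * S c ((0,Pi.single i 1),0)
        = S c ((d.1 : Fast r), (0:Slow k)) := fun c d => (clm_fast_expand (S c) d.1).symm
  have split : ∀ c d : SF r k, S c d = S c (d.1, (0:Slow k)) + S c ((0:Fast r), d.2) := by
    intro c d
    conv_lhs => rw [sf_decomp d]
    rw [map_add]
  have comm : ∀ (F G : Fin r → ℝ), (∑ i, F i * G i) = ∑ i, G i * F i :=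
    fun F G => Finset.sum_congr rfl (fun i _ => mul_comm _ _)
  simp only [Finset.sum_add_distrib, neg_mul, mul_neg, Finset.sum_neg_distrib]
  rw [comm (fun x => S a ((0, Pi.single x 1), 0)) (fun x => b.1.2 x),
      comm (fun x => S a ((Pi.single x 1, 0), 0)) (fun x => b.1.1 x)]
  linear_combination (-(1:ℝ)) * sum1 a b + sum1 b a
    - hS a ((b.1, (0:Slow k))) - split ((b.1, (0:Slow k))) a
    + hS b ((a.1, (0:Slow k))) + split ((a.1, (0:Slow k))) b
    - hS a (((0:Fast r), b.2)) - split (((0:Fast r), b.2)) a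
    + hS b (((0:Fast r), a.2)) + split (((0:Fast r), a.2)) b
    - hS ((b.1, (0:Slow k))) ((a.1, (0:Slow k)))
    - hS ((b.1, (0:Slow k))) (((0:Fast r), a.2))
    + hS ((a.1, (0:Slow k))) (((0:Fast r), b.2))
    + hS (((0:Fast r), a.2)) (((0:Fast r), b.2))

section Flow
variable {r k : ℕ} {φ : ℝ → SF r k → SF r k} {J : SF r k → ℝ}

lemma phi_contDiff (hφ : ContDiff ℝ (⊤:ℕ∞) (fun p : ℝ × SF r k => φ p.1 p.2)) (t : ℝ) :
    ContDiff ℝ (⊤:ℕ∞) (φ t) :=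
  hφ.comp ((contDiff_const (c := t)).prodMk contDiff_id)

lemma hasFDerivAt_phi (hφ : ContDiff ℝ (⊤:ℕ∞) (fun p : ℝ × SF r k => φ p.1 p.2)) (t : ℝ)
    (m : SF r k) :
    HasFDerivAt (φ t)
      ((fderiv ℝ (fun p : ℝ × SF r k => φ p.1 p.2) (t, m)).comp
        ((0 : SF r k →L[ℝ] ℝ).prod (ContinuousLinearMap.id ℝ (SF r k)))) m :=
  ((hφ.differentiable one_le_top' (t, m)).hasFDerivAt).comp m
    ((hasFDerivAt_const t m).prodMk (hasFDerivAt_id m))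

lemma fderiv_phi_apply (hφ : ContDiff ℝ (⊤:ℕ∞) (fun p : ℝ × SF r k => φ p.1 p.2)) (t : ℝ)
    (m : SF r k) (w : SF r k) :
    fderiv ℝ (φ t) m w = fderiv ℝ (fun p : ℝ × SF r k => φ p.1 p.2) (t, m) (0, w) := by
  rw [(hasFDerivAt_phi hφ t m).fderiv]
  simp

lemma fderiv_psi_time (hφ : ContDiff ℝ (⊤:ℕ∞) (fun p : ℝ × SF r k => φ p.1 p.2)) (t : ℝ)
    (m : SF r k) {X : SF r k} (hX : HasDerivAt (fun s => φ s m) X t) :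
    fderiv ℝ (fun p : ℝ × SF r k => φ p.1 p.2) (t, m) (1, 0) = X := by
  have h1 : HasDerivAt (fun s => φ s m)
      (fderiv ℝ (fun p : ℝ × SF r k => φ p.1 p.2) (t, m) ((1:ℝ), (0 : SF r k))) t := by
    have := ((hφ.differentiable one_le_top' (t, m)).hasFDerivAt).comp_hasDerivAt t
      ((hasDerivAt_id t).prodMk (hasDerivAt_const t m))
    exact this
  exact h1.unique hX

lemma curve_hasDerivAt (hφ : ContDiff ℝ (⊤:ℕ∞) (fun p : ℝ × SF r k => φ p.1 p.2)) (t : ℝ)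
    (m w : SF r k) :
    HasDerivAt (fun s => fderiv ℝ (φ s) m w)
      (fderiv ℝ (fun p : ℝ × SF r k =>
          fderiv ℝ (fun q : ℝ × SF r k => φ q.1 q.2) p (1, 0)) (t, m) (0, w)) t := by
  have hΨd : Differentiable ℝ (fun p : ℝ × SF r k => φ p.1 p.2) :=
    hφ.differentiable one_le_top'
  have hfΨ : ContDiff ℝ (⊤:ℕ∞) (fderiv ℝ (fun p : ℝ × SF r k => φ p.1 p.2)) :=
    hφ.fderiv_right top_add_one_le
  set Ψ := fun p : ℝ × SF r k => φ p.1 p.2 with hΨdef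
  set W := fderiv ℝ (fderiv ℝ Ψ) (t, m) with hWdef
  have hW : HasFDerivAt (fderiv ℝ Ψ) W (t, m) :=
    (hfΨ.differentiable one_le_top' (t, m)).hasFDerivAt
  have hfun : ∀ s, fderiv ℝ (φ s) m w = fderiv ℝ Ψ (s, m) (0, w) :=
    fun s => fderiv_phi_apply hφ s m w
  have h2 : HasDerivAt (fun s => fderiv ℝ Ψ (s, m)) (W (1, 0)) t :=
    hW.comp_hasDerivAt t ((hasDerivAt_id t).prodMk (hasDerivAt_const t m))
  have h1 : HasDerivAt (fun s => fderiv ℝ Ψ (s, m) (0, w)) (W (1, 0) (0, w)) t := by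
    simpa using h2.clm_apply (hasDerivAt_const t ((0, w) : ℝ × SF r k))
  have hsymm : W (1, 0) (0, w) = W (0, w) (1, 0) :=
    second_derivative_symmetric (fun y => (hΨd y).hasFDerivAt) hW _ _
  have h3 : HasFDerivAt (fun p : ℝ × SF r k => fderiv ℝ Ψ p (1, 0))
      ((ContinuousLinearMap.apply ℝ (SF r k) ((1:ℝ), (0 : SF r k))).comp W) (t, m) :=
    ((ContinuousLinearMap.apply ℝ (SF r k) ((1:ℝ), (0 : SF r k))).hasFDerivAt).comp (t, m) hW
  have h4 : fderiv ℝ (fun p : ℝ × SF r k => fderiv ℝ Ψ p (1, 0)) (t, m) (0, w)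
      = W (0, w) (1, 0) := by rw [h3.fderiv]; rfl
  rw [show (fun s => fderiv ℝ (φ s) m w) = fun s => fderiv ℝ Ψ (s, m) (0, w) from funext hfun,
    h4, ← hsymm]
  exact h1

lemma phi_slow {V : ℝ → SF r k → SF r k} (hφ0 : ∀ m, φ 0 m = m)
    (hφ' : ∀ t m, HasDerivAt (fun s => φ s m) (V t m) t)
    (hV : ∀ t m, (V t m).2 = 0) (t : ℝ) (m : SF r k) : (φ t m).2 = m.2 := by
  have hd : ∀ s, HasDerivAt (fun s => (φ s m).2) 0 s := fun s => by
    have := (ContinuousLinearMap.snd ℝ (Fast r) (Slow k)).hasFDerivAt.comp_hasDerivAt s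
      (hφ' s m)
    simpa [hV, Function.comp_def] using this
  have hdiff : Differentiable ℝ (fun s => (φ s m).2) := fun s => (hd s).differentiableAt
  have hconst : (φ t m).2 = (φ 0 m).2 :=
    is_const_of_deriv_eq_zero hdiff (fun s => (hd s).deriv) t 0
  rw [hconst, hφ0]

lemma upsilon_eq {H : SF r k → ℝ} {ω : SF r k → ℝ} (hH2 : ∀ m (u : Fast r),
      fderiv ℝ J m (u, (0 : Slow k)) = (1 / ω m) * fderiv ℝ H m (u, 0)) (x : SF r k) :
    (ω x)⁻¹ • fastVF H x = fastVF J x := by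
  unfold fastVF
  refine Prod.ext (Prod.ext ?_ ?_) (by simp)
  · funext i; simp [hH2, one_div, mul_neg]
  · funext i; simp [hH2, one_div]

lemma fderiv_clm_comp_apply' {E G : Type*} [NormedAddCommGroup E] [NormedSpace ℝ E]
    [NormedAddCommGroup G] [NormedSpace ℝ G] {F : Type*} [NormedAddCommGroup F]
    [NormedSpace ℝ F] (L : F →L[ℝ] G) {g : E → F} {p : E} (hg : DifferentiableAt ℝ g p)
    (q : E) : fderiv ℝ (fun x => L (g x)) p q = L (fderiv ℝ g p q) := by
  have h : HasFDerivAt (fun x => L (g x)) (L.comp (fderiv ℝ g p)) p :=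
    L.hasFDerivAt.comp p hg.hasFDerivAt
  rw [h.fderiv]; rfl

lemma mixed_scalar (hφ : ContDiff ℝ (⊤:ℕ∞) (fun p : ℝ × SF r k => φ p.1 p.2))
    (hJ : ContDiff ℝ (⊤:ℕ∞) J) (t : ℝ) (m : SF r k) (c : SF r k) :
    HasFDerivAt (fun p : ℝ × SF r k => fderiv ℝ J (φ p.1 p.2) c)
      ((ContinuousLinearMap.apply ℝ ℝ c).comp
        ((fderiv ℝ (fderiv ℝ J) (φ t m)).comp
          (fderiv ℝ (fun p : ℝ × SF r k => φ p.1 p.2) (t, m)))) (t, m) := by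
  have hB : HasFDerivAt (fderiv ℝ J) (fderiv ℝ (fderiv ℝ J) (φ t m)) (φ t m) :=
    (((hJ.fderiv_right top_add_one_le).differentiable one_le_top') (φ t m)).hasFDerivAt
  have hΨ : HasFDerivAt (fun p : ℝ × SF r k => φ p.1 p.2)
      (fderiv ℝ (fun p : ℝ × SF r k => φ p.1 p.2) (t, m)) (t, m) :=
    ((hφ.differentiable one_le_top') (t, m)).hasFDerivAt
  exact ((ContinuousLinearMap.apply ℝ ℝ c).hasFDerivAt).comp (t, m) (hB.comp (t, m) hΨ)

lemma comp_deriv_clm (hφ : ContDiff ℝ (⊤:ℕ∞) (fun p : ℝ × SF r k => φ p.1 p.2))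
    (t : ℝ) (m w : SF r k) (L : SF r k →L[ℝ] ℝ) :
    HasDerivAt (fun s => L (fderiv ℝ (φ s) m w))
      (fderiv ℝ (fun p : ℝ × SF r k =>
          L (fderiv ℝ (fun q : ℝ × SF r k => φ q.1 q.2) p (1, 0))) (t, m) (0, w)) t := by
  have hc := curve_hasDerivAt hφ t m w
  have h2 : HasDerivAt (fun s => L (fderiv ℝ (φ s) m w))
      (L (fderiv ℝ (fun p : ℝ × SF r k =>
        fderiv ℝ (fun q : ℝ × SF r k => φ q.1 q.2) p (1, 0)) (t, m) (0, w))) t :=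
    L.hasFDerivAt.comp_hasDerivAt t hc
  have hdiffG : DifferentiableAt ℝ (fun p : ℝ × SF r k =>
      fderiv ℝ (fun q : ℝ × SF r k => φ q.1 q.2) p ((1:ℝ), (0 : SF r k))) (t, m) :=
    (((hφ.fderiv_right top_add_one_le).clm_apply contDiff_const).differentiable
      one_le_top') (t, m)
  have e1 : L (fderiv ℝ (fun p : ℝ × SF r k =>
        fderiv ℝ (fun q : ℝ × SF r k => φ q.1 q.2) p (1, 0)) (t, m) (0, w))
      = fderiv ℝ (fun p : ℝ × SF r k =>
          L (fderiv ℝ (fun q : ℝ × SF r k => φ q.1 q.2) p (1, 0))) (t, m) (0, w) := by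
    have h : HasFDerivAt (fun p : ℝ × SF r k =>
        L (fderiv ℝ (fun q : ℝ × SF r k => φ q.1 q.2) p (1, 0)))
        (L.comp (fderiv ℝ (fun p : ℝ × SF r k =>
          fderiv ℝ (fun q : ℝ × SF r k => φ q.1 q.2) p (1, 0)) (t, m))) (t, m) :=
      L.hasFDerivAt.comp (t, m) hdiffG.hasFDerivAt
    rw [h.fderiv]; rfl
  rw [e1] at h2
  exact h2

lemma val_neg (hφ : ContDiff ℝ (⊤:ℕ∞) (fun p : ℝ × SF r k => φ p.1 p.2))
    (hJ : ContDiff ℝ (⊤:ℕ∞) J) (t : ℝ) (m w : SF r k) (c : SF r k) :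
    fderiv ℝ (fun p : ℝ × SF r k => -(fderiv ℝ J (φ p.1 p.2) c)) (t, m) (0, w)
      = -(fderiv ℝ (fderiv ℝ J) (φ t m) (fderiv ℝ (φ t) m w) c) := by
  have h := (mixed_scalar hφ hJ t m c).fun_neg
  rw [h.fderiv]
  simp [fderiv_phi_apply hφ t m w]

lemma val_pos (hφ : ContDiff ℝ (⊤:ℕ∞) (fun p : ℝ × SF r k => φ p.1 p.2))
    (hJ : ContDiff ℝ (⊤:ℕ∞) J) (t : ℝ) (m w : SF r k) (c : SF r k) :
    fderiv ℝ (fun p : ℝ × SF r k => fderiv ℝ J (φ p.1 p.2) c) (t, m) (0, w)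
      = fderiv ℝ (fderiv ℝ J) (φ t m) (fderiv ℝ (φ t) m w) c := by
  have h := mixed_scalar hφ hJ t m c
  rw [h.fderiv]
  simp [fderiv_phi_apply hφ t m w]

lemma comp11 (hφ : ContDiff ℝ (⊤:ℕ∞) (fun p : ℝ × SF r k => φ p.1 p.2))
    (hJ : ContDiff ℝ (⊤:ℕ∞) J)
    (hflow : ∀ p : ℝ × SF r k,
      fderiv ℝ (fun q : ℝ × SF r k => φ q.1 q.2) p (1, 0) = fastVF J (φ p.1 p.2))
    (t : ℝ) (m w : SF r k) (i : Fin r) :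
    HasDerivAt (fun s => (fderiv ℝ (φ s) m w).1.1 i)
      (-(fderiv ℝ (fderiv ℝ J) (φ t m) (fderiv ℝ (φ t) m w)
          ((0, Pi.single i 1), (0 : Slow k)))) t := by
  classical
  set L : SF r k →L[ℝ] ℝ := (ContinuousLinearMap.proj i).comp
    ((ContinuousLinearMap.fst ℝ (Fin r → ℝ) (Fin r → ℝ)).comp
      (ContinuousLinearMap.fst ℝ (Fast r) (Slow k))) with hL
  have h := comp_deriv_clm hφ t m w L
  have e2 : (fun p : ℝ × SF r k =>
      L (fderiv ℝ (fun q : ℝ × SF r k => φ q.1 q.2) p (1, 0)))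
      = fun p : ℝ × SF r k => -(fderiv ℝ J (φ p.1 p.2) ((0, Pi.single i 1), (0:Slow k))) := by
    funext p; rw [hflow p]; rfl
  rw [e2, val_neg hφ hJ t m w] at h
  exact h

lemma comp12 (hφ : ContDiff ℝ (⊤:ℕ∞) (fun p : ℝ × SF r k => φ p.1 p.2))
    (hJ : ContDiff ℝ (⊤:ℕ∞) J)
    (hflow : ∀ p : ℝ × SF r k,
      fderiv ℝ (fun q : ℝ × SF r k => φ q.1 q.2) p (1, 0) = fastVF J (φ p.1 p.2))
    (t : ℝ) (m w : SF r k) (i : Fin r) :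
    HasDerivAt (fun s => (fderiv ℝ (φ s) m w).1.2 i)
      (fderiv ℝ (fderiv ℝ J) (φ t m) (fderiv ℝ (φ t) m w)
          ((Pi.single i 1, 0), (0 : Slow k))) t := by
  classical
  set L : SF r k →L[ℝ] ℝ := (ContinuousLinearMap.proj i).comp
    ((ContinuousLinearMap.snd ℝ (Fin r → ℝ) (Fin r → ℝ)).comp
      (ContinuousLinearMap.fst ℝ (Fast r) (Slow k))) with hL
  have h := comp_deriv_clm hφ t m w L
  have e2 : (fun p : ℝ × SF r k =>
      L (fderiv ℝ (fun q : ℝ × SF r k => φ q.1 q.2) p (1, 0)))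
      = fun p : ℝ × SF r k => fderiv ℝ J (φ p.1 p.2) ((Pi.single i 1, 0), (0:Slow k)) := by
    funext p; rw [hflow p]; rfl
  rw [e2, val_pos hφ hJ t m w] at h
  exact h

lemma fderiv_phi_slow (hφ : ContDiff ℝ (⊤:ℕ∞) (fun p : ℝ × SF r k => φ p.1 p.2))
    (hs : ∀ t m, (φ t m).2 = m.2) (t : ℝ) (m w : SF r k) :
    (fderiv ℝ (φ t) m w).2 = w.2 := by
  have hdiff : DifferentiableAt ℝ (φ t) m :=
    ((phi_contDiff hφ t).differentiable one_le_top') m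
  have h1 : HasFDerivAt (fun m' : SF r k => (φ t m').2)
      ((ContinuousLinearMap.snd ℝ (Fast r) (Slow k)).comp (fderiv ℝ (φ t) m)) m :=
    (ContinuousLinearMap.snd ℝ (Fast r) (Slow k)).hasFDerivAt.comp m hdiff.hasFDerivAt
  have e : (fun m' : SF r k => (φ t m').2) = fun m' : SF r k => m'.2 := by
    funext m'; exact hs t m'
  rw [e] at h1
  have h2 : HasFDerivAt (fun m' : SF r k => m'.2)
      (ContinuousLinearMap.snd ℝ (Fast r) (Slow k)) m := hasFDerivAt_snd
  have h3 := h1.unique h2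
  calc (fderiv ℝ (φ t) m w).2
      = ((ContinuousLinearMap.snd ℝ (Fast r) (Slow k)).comp (fderiv ℝ (φ t) m)) w := rfl
    _ = w.2 := by rw [h3]; rfl

lemma secondJ_symm (hJ : ContDiff ℝ (⊤:ℕ∞) J) (x : SF r k) (a b : SF r k) :
    fderiv ℝ (fderiv ℝ J) x a b = fderiv ℝ (fderiv ℝ J) x b a :=
  second_derivative_symmetric
    (fun y => ((hJ.differentiable one_le_top') y).hasFDerivAt)
    (((hJ.fderiv_right top_add_one_le).differentiable one_le_top' x).hasFDerivAt) a b

lemma secondPhi_symm (hφ : ContDiff ℝ (⊤:ℕ∞) (fun p : ℝ × SF r k => φ p.1 p.2))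
    (t : ℝ) (m u v : SF r k) :
    fderiv ℝ (fderiv ℝ (φ t)) m u v = fderiv ℝ (fderiv ℝ (φ t)) m v u :=
  second_derivative_symmetric
    (fun y => (((phi_contDiff hφ t).differentiable one_le_top') y).hasFDerivAt)
    ((((phi_contDiff hφ t).fderiv_right top_add_one_le).differentiable
      one_le_top' m).hasFDerivAt) u v

lemma crux_hasDeriv (hφ : ContDiff ℝ (⊤:ℕ∞) (fun p : ℝ × SF r k => φ p.1 p.2))
    (hJ : ContDiff ℝ (⊤:ℕ∞) J)
    (hflow : ∀ p : ℝ × SF r k,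
      fderiv ℝ (fun q : ℝ × SF r k => φ q.1 q.2) p (1, 0) = fastVF J (φ p.1 p.2))
    (hs : ∀ t m, (φ t m).2 = m.2) (ε : ℝ) (m u v : SF r k) (t : ℝ) :
    HasDerivAt (fun s => sigmaE ε (fderiv ℝ (φ s) m u) (fderiv ℝ (φ s) m v))
      (fderiv ℝ (fderiv ℝ J) (φ t m) (fderiv ℝ (φ t) m u) ((0:Fast r), v.2)
        - fderiv ℝ (fderiv ℝ J) (φ t m) (fderiv ℝ (φ t) m v) ((0:Fast r), u.2)) t := by
  classical
  have funrw : (fun s => sigmaE ε (fderiv ℝ (φ s) m u) (fderiv ℝ (φ s) m v))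
      = fun s => (∑ i : Fin r, (fderiv ℝ (φ s) m u).1.1 i * (fderiv ℝ (φ s) m v).1.2 i
          - ∑ i : Fin r, (fderiv ℝ (φ s) m u).1.2 i * (fderiv ℝ (φ s) m v).1.1 i)
          + (1 / ε) * sigma1 u.2 v.2 := by
    funext s
    rw [sigmaE, sigma0, fderiv_phi_slow hφ hs s m u, fderiv_phi_slow hφ hs s m v]
  rw [funrw]
  have h1 : HasDerivAt (fun s =>
      ∑ i : Fin r, (fderiv ℝ (φ s) m u).1.1 i * (fderiv ℝ (φ s) m v).1.2 i)
      (∑ i : Fin r,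
        (-(fderiv ℝ (fderiv ℝ J) (φ t m) (fderiv ℝ (φ t) m u) ((0, Pi.single i 1), (0:Slow k)))
            * (fderiv ℝ (φ t) m v).1.2 i
          + (fderiv ℝ (φ t) m u).1.1 i
            * fderiv ℝ (fderiv ℝ J) (φ t m) (fderiv ℝ (φ t) m v)
              ((Pi.single i 1, 0), (0:Slow k)))) t :=
    HasDerivAt.fun_sum fun i _ =>
      (comp11 hφ hJ hflow t m u i).mul (comp12 hφ hJ hflow t m v i)
  have h2 : HasDerivAt (fun s =>
      ∑ i : Fin r, (fderiv ℝ (φ s) m u).1.2 i * (fderiv ℝ (φ s) m v).1.1 i)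
      (∑ i : Fin r,
        (fderiv ℝ (fderiv ℝ J) (φ t m) (fderiv ℝ (φ t) m u) ((Pi.single i 1, 0), (0:Slow k))
            * (fderiv ℝ (φ t) m v).1.1 i
          + (fderiv ℝ (φ t) m u).1.2 i
            * -(fderiv ℝ (fderiv ℝ J) (φ t m) (fderiv ℝ (φ t) m v)
              ((0, Pi.single i 1), (0:Slow k))))) t :=
    HasDerivAt.fun_sum fun i _ =>
      (comp12 hφ hJ hflow t m u i).mul (comp11 hφ hJ hflow t m v i)
  have h3 := (h1.sub h2).add_const ((1 / ε) * sigma1 u.2 v.2)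
  have e := cruxAlg (fderiv ℝ (fderiv ℝ J) (φ t m)) (secondJ_symm hJ (φ t m))
    (fderiv ℝ (φ t) m u) (fderiv ℝ (φ t) m v)
  rw [fderiv_phi_slow hφ hs t m u, fderiv_phi_slow hφ hs t m v] at e
  rw [e] at h3
  exact h3

lemma K_contDiff (hφ : ContDiff ℝ (⊤:ℕ∞) (fun p : ℝ × SF r k => φ p.1 p.2))
    (hJ : ContDiff ℝ (⊤:ℕ∞) J) :
    ContDiff ℝ (⊤:ℕ∞) (fun p : ℝ × SF r k =>
      (d1FormL J (φ p.1 p.2)).comp (fderiv ℝ (φ p.1) p.2)) := by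
  have hA : ContDiff ℝ (⊤:ℕ∞) (fun p : ℝ × SF r k => fderiv ℝ (φ p.1) p.2) := by
    have hunc : ContDiff ℝ (⊤:ℕ∞) (Function.uncurry fun (p : ℝ × SF r k) (m' : SF r k) =>
        φ p.1 m') :=
      hφ.comp ((contDiff_fst.comp contDiff_fst).prodMk contDiff_snd)
    exact hunc.fderiv contDiff_snd top_add_one_le
  have hdJ : ContDiff ℝ (⊤:ℕ∞) (fun z : SF r k => d1FormL J z) :=
    (hJ.fderiv_right top_add_one_le).clm_comp contDiff_const
  exact (hdJ.comp hφ).clm_comp hA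

lemma D_contDiff (hφ : ContDiff ℝ (⊤:ℕ∞) (fun p : ℝ × SF r k => φ p.1 p.2))
    (hJ : ContDiff ℝ (⊤:ℕ∞) J) :
    ContDiff ℝ (⊤:ℕ∞) (fun p : ℝ × SF r k =>
      fderiv ℝ (fun m' => (d1FormL J (φ p.1 m')).comp (fderiv ℝ (φ p.1) m')) p.2) := by
  have hK := K_contDiff hφ hJ
  have hunc : ContDiff ℝ (⊤:ℕ∞) (Function.uncurry fun (p : ℝ × SF r k) (m' : SF r k) =>
      (d1FormL J (φ p.1 m')).comp (fderiv ℝ (φ p.1) m')) :=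
    hK.comp ((contDiff_fst.comp contDiff_fst).prodMk contDiff_snd)
  exact hunc.fderiv contDiff_snd top_add_one_le

instance instENormedSF2 : ENormedAddMonoid (SF r k →L[ℝ] SF r k →L[ℝ] ℝ) :=
  NormedAddGroup.toENormedAddMonoid (F := SF r k →L[ℝ] SF r k →L[ℝ] ℝ)

set_option maxHeartbeats 1000000 in
lemma theta_deriv (hφ : ContDiff ℝ (⊤:ℕ∞) (fun p : ℝ × SF r k => φ p.1 p.2))
    (hJ : ContDiff ℝ (⊤:ℕ∞) J) (m : SF r k) :
    HasFDerivAt (fun m' => ∫ t in (0:ℝ)..(2*π),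
        (t - π) • ((d1FormL J (φ t m')).comp (fderiv ℝ (φ t) m')))
      (∫ t in (0:ℝ)..(2*π), (t - π) • fderiv ℝ
        (fun m' => (d1FormL J (φ t m')).comp (fderiv ℝ (φ t) m')) m) m := by
  have hK := K_contDiff hφ hJ
  set K : ℝ × SF r k → (SF r k →L[ℝ] ℝ) := fun p =>
    (d1FormL J (φ p.1 p.2)).comp (fderiv ℝ (φ p.1) p.2) with hKdef
  have hKt : ∀ x : SF r k, Continuous (fun t : ℝ => (t - π) • K (t, x)) := fun x =>
    (continuous_id.sub continuous_const).smul
      ((hK.continuous).comp (continuous_id.prodMk continuous_const))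
  have hD : ContDiff ℝ (⊤:ℕ∞) (fun p : ℝ × SF r k =>
      fderiv ℝ (fun m' => K (p.1, m')) p.2) := by
    have hunc : ContDiff ℝ (⊤:ℕ∞) (Function.uncurry fun (p : ℝ × SF r k) (m' : SF r k) =>
        K (p.1, m')) :=
      hK.comp ((contDiff_fst.comp contDiff_fst).prodMk contDiff_snd)
    exact hunc.fderiv contDiff_snd top_add_one_le
  obtain ⟨C, hC⟩ := (isCompact_uIcc (a := (0:ℝ)) (b := 2*π)).prod
    (isCompact_closedBall m 1) |>.exists_bound_of_continuousOn (E := SF r k →L[ℝ] SF r k →L[ℝ] ℝ)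
    (((continuous_fst.sub continuous_const).smul hD.continuous).continuousOn)
  have hKm : ∀ x : SF r k, ∀ t : ℝ, HasFDerivAt (fun m' => K (t, m'))
      (fderiv ℝ (fun m' => K (t, m')) x) x := by
    intro x t
    have : ContDiff ℝ (⊤:ℕ∞) (fun m' : SF r k => K (t, m')) :=
      hK.comp (contDiff_const.prodMk contDiff_id)
    exact ((this.differentiable one_le_top') x).hasFDerivAt
  refine intervalIntegral.hasFDerivAt_integral_of_dominated_of_fderiv_le
    (F := fun x t => (t - π) • K (t, x))
    (F' := fun x t => (t - π) • fderiv ℝ (fun m' => K (t, m')) x)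
    (bound := fun _ => C) (s := Metric.ball m 1) (Metric.ball_mem_nhds m one_pos) ?_ ?_ ?_ ?_ ?_ ?_
  · exact Filter.Eventually.of_forall fun x => (hKt x).aestronglyMeasurable
  · exact (hKt m).intervalIntegrable 0 (2*π)
  · refine Continuous.aestronglyMeasurable ?_
    exact (continuous_id.sub continuous_const).smul
      ((hD.continuous).comp (continuous_id.prodMk continuous_const))
  · refine Filter.Eventually.of_forall fun t ht x hx => ?_
    exact hC ((t, x)) ⟨uIoc_subset_uIcc ht, Metric.ball_subset_closedBall hx⟩
  · exact intervalIntegrable_const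
  · refine Filter.Eventually.of_forall fun t ht x hx => ?_
    exact (hKm x t).const_smul (t - π)

lemma Duv (hφ : ContDiff ℝ (⊤:ℕ∞) (fun p : ℝ × SF r k => φ p.1 p.2))
    (hJ : ContDiff ℝ (⊤:ℕ∞) J) (t : ℝ) (m u v : SF r k) :
    fderiv ℝ (fun m' => (d1FormL J (φ t m')).comp (fderiv ℝ (φ t) m')) m u v
      = fderiv ℝ (fderiv ℝ J) (φ t m) (fderiv ℝ (φ t) m u)
          ((0 : Fast r), (fderiv ℝ (φ t) m v).2)
        + fderiv ℝ J (φ t m) ((0:Fast r), (fderiv ℝ (fderiv ℝ (φ t)) m u v).2) := by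
  set ι : SF r k →L[ℝ] SF r k :=
    (ContinuousLinearMap.inr ℝ (Fast r) (Slow k)).comp
      (ContinuousLinearMap.snd ℝ (Fast r) (Slow k)) with hι
  have hFdiff : DifferentiableAt ℝ
      (fun m' => (d1FormL J (φ t m')).comp (fderiv ℝ (φ t) m')) m :=
    ((K_contDiff hφ hJ).comp (contDiff_const.prodMk contDiff_id)).differentiable one_le_top' m
  have hdphi : Differentiable ℝ (fderiv ℝ (φ t)) :=
    ((phi_contDiff hφ t).fderiv_right top_add_one_le).differentiable one_le_top'
  have step1 : fderiv ℝ (fun m' => (d1FormL J (φ t m')).comp (fderiv ℝ (φ t) m')) m u v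
      = fderiv ℝ (fun m' => fderiv ℝ J (φ t m') (ι ((fderiv ℝ (φ t) m') v))) m u :=
    (fderiv_clm_comp_apply' (ContinuousLinearMap.apply ℝ ℝ v) hFdiff u).symm
  have hB : HasFDerivAt (fderiv ℝ J) (fderiv ℝ (fderiv ℝ J) (φ t m)) (φ t m) :=
    ((hJ.fderiv_right top_add_one_le).differentiable one_le_top' (φ t m)).hasFDerivAt
  have hAt : HasFDerivAt (φ t) (fderiv ℝ (φ t) m) m :=
    (((phi_contDiff hφ t).differentiable one_le_top') m).hasFDerivAt
  have hc : HasFDerivAt (fun m' => fderiv ℝ J (φ t m'))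
      ((fderiv ℝ (fderiv ℝ J) (φ t m)).comp (fderiv ℝ (φ t) m)) m := hB.comp m hAt
  have hE : HasFDerivAt (fun m' => (fderiv ℝ (φ t) m') v)
      (fderiv ℝ (fun m' => (fderiv ℝ (φ t) m') v) m) m := by
    refine DifferentiableAt.hasFDerivAt ?_
    exact (hdphi m).clm_apply (differentiableAt_const v)
  have hu : HasFDerivAt (fun m' => ι ((fderiv ℝ (φ t) m') v))
      (ι.comp (fderiv ℝ (fun m' => (fderiv ℝ (φ t) m') v) m)) m := ι.hasFDerivAt.comp m hE
  have hprod := hc.clm_apply hu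
  have step2 : fderiv ℝ (fun m' => fderiv ℝ J (φ t m') (ι ((fderiv ℝ (φ t) m') v))) m u
      = fderiv ℝ J (φ t m) (ι (fderiv ℝ (fun m' => (fderiv ℝ (φ t) m') v) m u))
        + fderiv ℝ (fderiv ℝ J) (φ t m) (fderiv ℝ (φ t) m u) (ι (fderiv ℝ (φ t) m v)) := by
    rw [hprod.fderiv]
    simp
  have step3 : fderiv ℝ (fun m' => (fderiv ℝ (φ t) m') v) m u
      = fderiv ℝ (fderiv ℝ (φ t)) m u v :=
    fderiv_clm_comp_apply' (ContinuousLinearMap.apply ℝ (SF r k) v) (hdphi m) u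
  have hιapp : ∀ z : SF r k, ι z = ((0 : Fast r), z.2) := fun z => rfl
  rw [step1, step2, step3, hιapp, hιapp]
  ring

end Flow

set_option maxHeartbeats 2000000 in
/-- Under hypotheses (H1)-(H3), with `Θ = S(d₁J)`, the average of
the singular symplectic form `σ_ε` along the flow satisfies
`⟨σ_ε⟩ = σ_ε − dΘ` for every `ε ≠ 0`. -/
theorem stmt11 {r k : ℕ} (H : SF r k → ℝ) (hH : ContDiff ℝ (⊤ : ℕ∞) H)
    (ω : SF r k → ℝ) (hω_smooth : ContDiff ℝ (⊤ : ℕ∞) ω) (hω_pos : ∀ m, 0 < ω m)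
    (φ : ℝ → SF r k → SF r k)
    (hφ_smooth : ContDiff ℝ (⊤ : ℕ∞) (fun p : ℝ × SF r k => φ p.1 p.2))
    (hφ0 : ∀ m, φ 0 m = m)
    (hφ' : ∀ t m, HasDerivAt (fun s => φ s m) ((ω (φ t m))⁻¹ • fastVF H (φ t m)) t)
    (hper : ∀ t m, φ (t + 2 * π) m = φ t m)
    (J : SF r k → ℝ) (hJ_smooth : ContDiff ℝ (⊤ : ℕ∞) J)
    (hH2 : ∀ m (u : Fast r),
      fderiv ℝ J m (u, (0 : Slow k)) = (1 / ω m) * fderiv ℝ H m (u, 0))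
    (hH3 : ∀ m w, avg1 φ (d1Form J) m w = 0) :
    ∀ ε : ℝ, ε ≠ 0 → ∀ m u v,
      avg2 φ (fun _ => sigmaE ε) m u v =
        sigmaE ε u v -
          (fderiv ℝ (ThetaL φ J) m u v - fderiv ℝ (ThetaL φ J) m v u) := by
  intro ε hε m u v
  classical
  -- flow facts
  have hflow : ∀ p : ℝ × SF r k,
      fderiv ℝ (fun q : ℝ × SF r k => φ q.1 q.2) p (1, 0) = fastVF J (φ p.1 p.2) := by
    intro p
    have h1 : HasDerivAt (fun s => φ s p.2)
        ((ω (φ p.1 p.2))⁻¹ • fastVF H (φ p.1 p.2)) p.1 := hφ' p.1 p.2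
    rw [upsilon_eq hH2] at h1
    exact fderiv_psi_time hφ_smooth p.1 p.2 h1
  have hs : ∀ t m', (φ t m').2 = m'.2 := by
    refine phi_slow hφ0 hφ' ?_
    intro t m'
    show ((ω (φ t m'))⁻¹ • fastVF H (φ t m')).2 = 0
    simp [fastVF]
  -- abbreviations
  set B : SF r k → (SF r k →L[ℝ] SF r k →L[ℝ] ℝ) := fun x => fderiv ℝ (fderiv ℝ J) x
    with hBdef
  set f : ℝ → ℝ := fun t => sigmaE ε (fderiv ℝ (φ t) m u) (fderiv ℝ (φ t) m v) with hfdef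
  set g : ℝ → ℝ := fun t =>
    B (φ t m) (fderiv ℝ (φ t) m u) ((0:Fast r), v.2)
      - B (φ t m) (fderiv ℝ (φ t) m v) ((0:Fast r), u.2) with hgdef
  -- continuity facts
  have hfΨc : Continuous (fderiv ℝ (fun p : ℝ × SF r k => φ p.1 p.2)) :=
    (hφ_smooth.fderiv_right top_add_one_le).continuous
  have hAcont : ∀ w : SF r k, Continuous (fun t => fderiv ℝ (φ t) m w) := by
    intro w
    have e : (fun t => fderiv ℝ (φ t) m w)
        = fun t => (fderiv ℝ (fun p : ℝ × SF r k => φ p.1 p.2) (t, m)) (0, w) :=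
      funext fun t => fderiv_phi_apply hφ_smooth t m w
    rw [e]
    exact (hfΨc.comp (continuous_id.prodMk continuous_const)).clm_apply continuous_const
  have hφtm : Continuous (fun t => φ t m) :=
    hφ_smooth.continuous.comp (continuous_id.prodMk continuous_const)
  have hBcont : Continuous (fun t => B (φ t m)) :=
    (((hJ_smooth.fderiv_right top_add_one_le).fderiv_right
      top_add_one_le).continuous).comp hφtm
  have hgcont : Continuous g := by
    rw [hgdef]
    exact ((hBcont.clm_apply (hAcont u)).clm_apply continuous_const).sub
      ((hBcont.clm_apply (hAcont v)).clm_apply continuous_const)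
  have hLcont : ∀ (w : SF r k) (L : SF r k →L[ℝ] ℝ),
      Continuous (fun t => L (fderiv ℝ (φ t) m w)) := fun w L =>
    L.continuous.comp (hAcont w)
  have hfcont : Continuous f := by
    have funrw : f = fun t =>
        (∑ i : Fin r, (fderiv ℝ (φ t) m u).1.1 i * (fderiv ℝ (φ t) m v).1.2 i
          - ∑ i : Fin r, (fderiv ℝ (φ t) m u).1.2 i * (fderiv ℝ (φ t) m v).1.1 i)
          + (1 / ε) * sigma1 u.2 v.2 := by
      funext t
      rw [hfdef]
      show sigmaE ε (fderiv ℝ (φ t) m u) (fderiv ℝ (φ t) m v) = _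
      rw [sigmaE, sigma0, fderiv_phi_slow hφ_smooth hs t m u,
        fderiv_phi_slow hφ_smooth hs t m v]
    rw [funrw]
    have c11 : ∀ (w : SF r k) (i : Fin r),
        Continuous (fun t => (fderiv ℝ (φ t) m w).1.1 i) := fun w i =>
      hLcont w ((ContinuousLinearMap.proj i).comp
        ((ContinuousLinearMap.fst ℝ (Fin r → ℝ) (Fin r → ℝ)).comp
          (ContinuousLinearMap.fst ℝ (Fast r) (Slow k))))
    have c12 : ∀ (w : SF r k) (i : Fin r),
        Continuous (fun t => (fderiv ℝ (φ t) m w).1.2 i) := fun w i =>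
      hLcont w ((ContinuousLinearMap.proj i).comp
        ((ContinuousLinearMap.snd ℝ (Fin r → ℝ) (Fin r → ℝ)).comp
          (ContinuousLinearMap.fst ℝ (Fast r) (Slow k))))
    refine Continuous.add ?_ continuous_const
    exact (continuous_finset_sum _ fun i _ => (c11 u i).mul (c12 v i)).sub
      (continuous_finset_sum _ fun i _ => (c12 u i).mul (c11 v i))
  -- pointwise derivative
  have hder : ∀ t, HasDerivAt f (g t) t := fun t =>
    crux_hasDeriv hφ_smooth hJ_smooth hflow hs ε m u v t
  -- FTC for (t - π) * f t
  have hF : ∀ t ∈ uIcc (0:ℝ) (2*π),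
      HasDerivAt (fun s => (s - π) * f s) (f t + (t - π) * g t) t := by
    intro t _
    have h := ((hasDerivAt_id t).sub_const π).fun_mul (hder t)
    simpa using h
  have hint : IntervalIntegrable (fun t => f t + (t - π) * g t) volume 0 (2*π) :=
    (hfcont.add ((continuous_id.sub continuous_const).mul hgcont)).intervalIntegrable 0 (2*π)
  have hFTC := intervalIntegral.integral_eq_sub_of_hasDerivAt hF hint
  -- endpoint values
  have hid0 : φ 0 = (id : SF r k → SF r k) := funext hφ0
  have hid2 : φ (2*π) = (id : SF r k → SF r k) := by
    funext m'
    rw [show (2*π) = 0 + 2*π by ring, hper 0 m', hφ0]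
    rfl
  have hf0 : f 0 = sigmaE ε u v := by
    rw [hfdef]
    show sigmaE ε (fderiv ℝ (φ 0) m u) (fderiv ℝ (φ 0) m v) = _
    rw [hid0, fderiv_id]
    rfl
  have hf2 : f (2*π) = sigmaE ε u v := by
    rw [hfdef]
    show sigmaE ε (fderiv ℝ (φ (2*π)) m u) (fderiv ℝ (φ (2*π)) m v) = _
    rw [hid2, fderiv_id]
    rfl
  have hi1 : IntervalIntegrable f volume 0 (2*π) := hfcont.intervalIntegrable 0 (2*π)
  have hi2 : IntervalIntegrable (fun t => (t - π) * g t) volume 0 (2*π) :=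
    ((continuous_id.sub continuous_const).mul hgcont).intervalIntegrable 0 (2*π)
  have hsplit : (∫ t in (0:ℝ)..(2*π), (f t + (t - π) * g t))
      = (∫ t in (0:ℝ)..(2*π), f t) + ∫ t in (0:ℝ)..(2*π), (t - π) * g t :=
    intervalIntegral.integral_add hi1 hi2
  have hkey : (∫ t in (0:ℝ)..(2*π), f t)
      = 2 * π * sigmaE ε u v - ∫ t in (0:ℝ)..(2*π), (t - π) * g t := by
    rw [hsplit] at hFTC
    rw [hf0, hf2] at hFTC
    linarith [hFTC]
  -- Theta derivative
  have hTheta : HasFDerivAt (ThetaL φ J)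
      ((1/(2*π)) • ∫ t in (0:ℝ)..(2*π), (t - π) • fderiv ℝ
        (fun m' => (d1FormL J (φ t m')).comp (fderiv ℝ (φ t) m')) m) m :=
    (theta_deriv hφ_smooth hJ_smooth m).const_smul (1/(2*π))
  have hDcont : Continuous (fun t => fderiv ℝ
      (fun m' => (d1FormL J (φ t m')).comp (fderiv ℝ (φ t) m')) m) :=
    ((D_contDiff hφ_smooth hJ_smooth).continuous).comp
      (continuous_id.prodMk continuous_const)
  have hiD : IntervalIntegrable (fun t => (t - π) • fderiv ℝ
      (fun m' => (d1FormL J (φ t m')).comp (fderiv ℝ (φ t) m')) m) volume 0 (2*π) :=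
    Continuous.intervalIntegrable (E := SF r k →L[ℝ] SF r k →L[ℝ] ℝ)
      ((continuous_id.sub continuous_const).smul hDcont) 0 (2*π)
  have happly : ∀ w : SF r k, ∀ w' : SF r k,
      fderiv ℝ (ThetaL φ J) m w w' = (1/(2*π)) * ∫ t in (0:ℝ)..(2*π),
        (t - π) * fderiv ℝ
          (fun m' => (d1FormL J (φ t m')).comp (fderiv ℝ (φ t) m')) m w w' := by
    intro w w'
    rw [hTheta.fderiv]
    rw [ContinuousLinearMap.smul_apply, ContinuousLinearMap.smul_apply]
    rw [ContinuousLinearMap.intervalIntegral_apply hiD w]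
    have hiDw : IntervalIntegrable (fun t => ((t - π) • fderiv ℝ
        (fun m' => (d1FormL J (φ t m')).comp (fderiv ℝ (φ t) m')) m) w) volume 0 (2*π) :=
      (((continuous_id.sub continuous_const).smul hDcont).clm_apply
        continuous_const).intervalIntegrable 0 (2*π)
    rw [ContinuousLinearMap.intervalIntegral_apply hiDw w']
    simp only [ContinuousLinearMap.smul_apply, smul_eq_mul]
  -- identify the integrands
  have hgD : ∀ t : ℝ,
      fderiv ℝ (fun m' => (d1FormL J (φ t m')).comp (fderiv ℝ (φ t) m')) m u v
        - fderiv ℝ (fun m' => (d1FormL J (φ t m')).comp (fderiv ℝ (φ t) m')) m v u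
      = g t := by
    intro t
    rw [Duv hφ_smooth hJ_smooth t m u v, Duv hφ_smooth hJ_smooth t m v u,
      secondPhi_symm hφ_smooth t m u v, fderiv_phi_slow hφ_smooth hs t m u,
      fderiv_phi_slow hφ_smooth hs t m v, hgdef]
    ring
  have hiDuv : ∀ (w w' : SF r k), IntervalIntegrable (fun t => (t - π) * fderiv ℝ
      (fun m' => (d1FormL J (φ t m')).comp (fderiv ℝ (φ t) m')) m w w') volume 0 (2*π) :=
    fun w w' => ((continuous_id.sub continuous_const).mul
      ((hDcont.clm_apply continuous_const).clm_apply continuous_const)).intervalIntegrable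
        0 (2*π)
  have hTdiff : fderiv ℝ (ThetaL φ J) m u v - fderiv ℝ (ThetaL φ J) m v u
      = (1/(2*π)) * ∫ t in (0:ℝ)..(2*π), (t - π) * g t := by
    rw [happly u v, happly v u, ← mul_sub,
      ← intervalIntegral.integral_sub (hiDuv u v) (hiDuv v u)]
    congr 1
    refine intervalIntegral.integral_congr fun t _ => ?_
    rw [← mul_sub, hgD t]
  -- final computation
  have hπ : (2:ℝ) * π ≠ 0 := by positivity
  show (1 / (2*π)) * (∫ t in (0:ℝ)..(2*π),
      sigmaE ε (fderiv ℝ (φ t) m u) (fderiv ℝ (φ t) m v))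
    = sigmaE ε u v - (fderiv ℝ (ThetaL φ J) m u v - fderiv ℝ (ThetaL φ J) m v u)
  rw [hTdiff]
  have : (∫ t in (0:ℝ)..(2*π),
      sigmaE ε (fderiv ℝ (φ t) m u) (fderiv ℝ (φ t) m v))
      = 2 * π * sigmaE ε u v - ∫ t in (0:ℝ)..(2*π), (t - π) * g t := hkey
  rw [this]
  field_simp
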